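/- For smooth mean-zero $\varphi$ on the torus, with $X^2_{t,s}(\varphi,\varphi,\varphi) = 2\int_s^t\int_s^\sigma \dot X_\sigma(\varphi, \dot X_{\sigma_1}(\varphi,\varphi))\,d\sigma_1\,d\sigma$, one has $2\langle \varphi, X^2_{t,s}(\varphi,\varphi,\varphi)\rangle_{L^2} + \|X_{t,s}(\varphi,\varphi)\|_{L^2}^2 = 0$. -/

import Mathlib

open MeasureTheory
open scoped Real

/-- The Airy group `U(s)` in Fourier variables: `(U(s)φ)^(k) = e^{ik³s} φ̂(k)`. -/
noncomputable def Ugrp (s : ℝ) (φ : ℤ → ℂ) : ℤ → ℂ := fun k =>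
  Complex.exp (Complex.I * (k : ℂ) ^ 3 * s) * φ k

/-- The space derivative `∂_ξ` in Fourier variables. -/
noncomputable def dxi (φ : ℤ → ℂ) : ℤ → ℂ := fun k => Complex.I * k * φ k

/-- The pointwise product of functions becomes convolution of Fourier coefficients. -/
noncomputable def conv (φ ψ : ℤ → ℂ) : ℤ → ℂ := fun k => ∑' k₁ : ℤ, φ k₁ * ψ (k - k₁)

/-- `Ẋ_σ(φ₁,φ₂) = ½ U(-σ) ∂_ξ [(U(σ)φ₁)(U(σ)φ₂)]` in Fourier variables. -/
noncomputable def Xdot (σ : ℝ) (φ₁ φ₂ : ℤ → ℂ) : ℤ → ℂ := fun k =>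
  (1 / 2 : ℂ) * Ugrp (-σ) (dxi (conv (Ugrp σ φ₁) (Ugrp σ φ₂))) k

/-- `X_{t,s} = ∫_s^t Ẋ_σ dσ`. -/
noncomputable def Xop (s t : ℝ) (φ ψ : ℤ → ℂ) : ℤ → ℂ := fun k =>
  ∫ σ in s..t, Xdot σ φ ψ k

/-- `X²_{t,s}(φ₁,φ₂,φ₃) = 2∫_s^t ∫_s^σ Ẋ_σ(φ₁, Ẋ_{σ₁}(φ₂,φ₃)) dσ₁ dσ`. -/
noncomputable def X2op (s t : ℝ) (φ₁ φ₂ φ₃ : ℤ → ℂ) : ℤ → ℂ := fun k =>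
  2 * ∫ σ in s..t, ∫ σ₁ in s..σ, Xdot σ φ₁ (Xdot σ₁ φ₂ φ₃) k

/-- The real `L²(𝕋)` inner product in Fourier variables. -/
noncomputable def innerL2 (φ ψ : ℤ → ℂ) : ℂ := (2 * π) * ∑' k : ℤ, φ (-k) * ψ k

/-! ### Auxiliary lemmas -/

lemma Ugrp_apply (s : ℝ) (φ : ℤ → ℂ) (k : ℤ) :
    Ugrp s φ k = Complex.exp (Complex.I * (k : ℂ) ^ 3 * s) * φ k := rfl

lemma dxi_apply (φ : ℤ → ℂ) (k : ℤ) : dxi φ k = Complex.I * k * φ k := rfl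

lemma Ugrp_eq_zero {φ : ℤ → ℂ} {k : ℤ} (h : φ k = 0) (s : ℝ) : Ugrp s φ k = 0 := by
  simp [Ugrp, h]

lemma support_Ugrp (s : ℝ) (φ : ℤ → ℂ) :
    Function.support (Ugrp s φ) = Function.support φ := by
  ext k; simp [Ugrp, Complex.exp_ne_zero]

/-- Expansion of `Xdot` as a finite sum when the first argument has finite support. -/
lemma Xdot_eq_sum {g : ℤ → ℂ} (h : ℤ → ℂ) {S : Finset ℤ} (hg : ∀ a ∉ S, g a = 0)
    (σ : ℝ) (k : ℤ) :
    Xdot σ g h k = ∑ a ∈ S, (1 / 2 : ℂ) *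
      (Complex.exp (Complex.I * (k : ℂ) ^ 3 * ((-σ : ℝ) : ℂ)) *
        (Complex.I * (k : ℂ) * (Ugrp σ g a * Ugrp σ h (k - a)))) := by
  have hconv : conv (Ugrp σ g) (Ugrp σ h) k = ∑ a ∈ S, Ugrp σ g a * Ugrp σ h (k - a) := by
    refine tsum_eq_sum fun a ha => ?_
    rw [Ugrp_eq_zero (hg a ha), zero_mul]
  show (1 / 2 : ℂ) * Ugrp (-σ) (dxi (conv (Ugrp σ g) (Ugrp σ h))) k = _
  rw [Ugrp_apply, dxi_apply, hconv]
  simp only [Finset.mul_sum]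

/-- Vanishing of `Xdot` outside the sum of the supports. -/
lemma Xdot_vanish {g h : ℤ → ℂ} {A B : ℕ} (hg : ∀ a : ℤ, A < a.natAbs → g a = 0)
    (hh : ∀ a : ℤ, B < a.natAbs → h a = 0) (σ : ℝ) {k : ℤ} (hk : A + B < k.natAbs) :
    Xdot σ g h k = 0 := by
  have hconv : conv (Ugrp σ g) (Ugrp σ h) k = 0 := by
    have : ∀ a : ℤ, Ugrp σ g a * Ugrp σ h (k - a) = 0 := by
      intro a
      by_cases ha : A < a.natAbs
      · rw [Ugrp_eq_zero (hg a ha), zero_mul]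
      · have : B < (k - a).natAbs := by omega
        rw [Ugrp_eq_zero (hh _ this), mul_zero]
    show (∑' a : ℤ, Ugrp σ g a * Ugrp σ h (k - a)) = 0
    simp [this]
  show (1 / 2 : ℂ) * Ugrp (-σ) (dxi (conv (Ugrp σ g) (Ugrp σ h))) k = 0
  rw [Ugrp_apply, dxi_apply, hconv]
  ring

lemma Xop_vanish {g h : ℤ → ℂ} {A B : ℕ} (hg : ∀ a : ℤ, A < a.natAbs → g a = 0)
    (hh : ∀ a : ℤ, B < a.natAbs → h a = 0) (u v : ℝ) {k : ℤ} (hk : A + B < k.natAbs) :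
    Xop u v g h k = 0 := by
  show (∫ σ in u..v, Xdot σ g h k) = 0
  have : ∀ σ : ℝ, Xdot σ g h k = 0 := fun σ => Xdot_vanish hg hh σ hk
  simp [this]

/-- `innerL2` as a finite sum when the second argument vanishes for large frequencies. -/
lemma innerL2_eq_sum {g : ℤ → ℂ} {M : ℕ} (hg : ∀ k : ℤ, M < k.natAbs → g k = 0) (f : ℤ → ℂ) :
    innerL2 f g = (2 * (π : ℂ)) * ∑ k ∈ Finset.Icc (-(M : ℤ)) (M : ℤ), f (-k) * g k := by
  rw [innerL2]
  congr 1
  refine tsum_eq_sum fun k hk => ?_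
  have : g k = 0 := by
    refine hg k ?_
    simp only [Finset.mem_Icc] at hk
    omega
  rw [this, mul_zero]

/-! ### The reindexing equivalences -/

/-- `(a, b) ↦ (a + b, a)`. -/
def eConv : ℤ × ℤ ≃ ℤ × ℤ where
  toFun p := (p.1 + p.2, p.1)
  invFun p := (p.2, p.1 - p.2)
  left_inv p := by simp
  right_inv p := by simp

/-- The involution `(a, b) ↦ (-a - b, b)`. -/
def eA : ℤ × ℤ ≃ ℤ × ℤ where
  toFun p := (-p.1 - p.2, p.2)
  invFun p := (-p.1 - p.2, p.2)
  left_inv p := by cases p; simp [Prod.ext_iff]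
  right_inv p := by cases p; simp [Prod.ext_iff]

/-- The involution `(a, b) ↦ (a, -a - b)`. -/
def eB : ℤ × ℤ ≃ ℤ × ℤ where
  toFun p := (p.1, -p.1 - p.2)
  invFun p := (p.1, -p.1 - p.2)
  left_inv p := by cases p; simp [Prod.ext_iff]
  right_inv p := by cases p; simp [Prod.ext_iff]

/-- The generic summand appearing in `⟨f, Ẋ_σ(g,h)⟩`. -/
noncomputable def qq (F G H : ℤ → ℂ) : ℤ × ℤ → ℂ := fun p =>
  Complex.I * ((p.1 : ℂ) + (p.2 : ℂ)) * F (-(p.1 + p.2)) * (G p.1 * H p.2)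

lemma qq_summable {F G H : ℤ → ℂ} (hG : (Function.support G).Finite)
    (hH : (Function.support H).Finite) : Summable (qq F G H) := by
  classical
  refine summable_of_ne_finset_zero (s := hG.toFinset ×ˢ hH.toFinset) ?_
  rintro ⟨a, b⟩ hp
  rw [Finset.mem_product, not_and_or] at hp
  rcases hp with hp | hp
  · have : G a = 0 := by
      by_contra hne
      exact hp (hG.mem_toFinset.mpr hne)
    simp [qq, this]
  · have : H b = 0 := by
      by_contra hne
      exact hp (hH.mem_toFinset.mpr hne)
    simp [qq, this]

/-- `⟨f, Ẋ_σ(g,h)⟩` as a sum over `ℤ²`. -/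
lemma inner_Xdot (σ : ℝ) (f g h : ℤ → ℂ) (hf : (Function.support f).Finite)
    (hg : (Function.support g).Finite) :
    innerL2 f (Xdot σ g h) =
      (π : ℂ) * ∑' p : ℤ × ℤ, qq (Ugrp σ f) (Ugrp σ g) (Ugrp σ h) p := by
  classical
  set Sg := hg.toFinset with hSg
  set Sf : Finset ℤ := hf.toFinset.image (fun x => -x) with hSf
  have hgS : ∀ a ∉ Sg, g a = 0 := by
    intro a ha
    by_contra hne
    exact ha (hg.mem_toFinset.mpr hne)
  set r : ℤ × ℤ → ℂ := fun p => f (-p.1) * ((1 / 2 : ℂ) *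
      (Complex.exp (Complex.I * (p.1 : ℂ) ^ 3 * ((-σ : ℝ) : ℂ)) *
        (Complex.I * (p.1 : ℂ) * (Ugrp σ g p.2 * Ugrp σ h (p.1 - p.2))))) with hr
  have h1 : innerL2 f (Xdot σ g h) = (2 * (π : ℂ)) * ∑ k ∈ Sf, f (-k) * Xdot σ g h k := by
    rw [innerL2]
    congr 1
    refine tsum_eq_sum fun k hk => ?_
    have : f (-k) = 0 := by
      by_contra hne
      exact hk (Finset.mem_image.mpr ⟨-k, hf.mem_toFinset.mpr hne, by ring⟩)
    rw [this, zero_mul]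
  have h2 : ∑ k ∈ Sf, f (-k) * Xdot σ g h k = ∑ p ∈ Sf ×ˢ Sg, r p := by
    rw [Finset.sum_product]
    refine Finset.sum_congr rfl fun k _ => ?_
    rw [Xdot_eq_sum h hgS σ k, Finset.mul_sum]
  have h3 : ∑ p ∈ Sf ×ˢ Sg, r p = ∑' p : ℤ × ℤ, r p := by
    refine (tsum_eq_sum ?_).symm
    rintro ⟨k, a⟩ hp
    rw [Finset.mem_product, not_and_or] at hp
    rcases hp with hp | hp
    · have : f (-k) = 0 := by
        by_contra hne
        exact hp (Finset.mem_image.mpr ⟨-k, hf.mem_toFinset.mpr hne, by ring⟩)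
      simp [hr, this]
    · have : g a = 0 := hgS a hp
      simp [hr, Ugrp_eq_zero this]
  have h4 : ∑' p : ℤ × ℤ, r p = ∑' p : ℤ × ℤ, r (eConv p) := (eConv.tsum_eq r).symm
  have h5 : ∀ p : ℤ × ℤ, r (eConv p) =
      (1 / 2 : ℂ) * qq (Ugrp σ f) (Ugrp σ g) (Ugrp σ h) p := by
    rintro ⟨a, b⟩
    have harg : (a + b - a : ℤ) = b := by ring
    have hexp : Complex.exp (Complex.I * ((a + b : ℤ) : ℂ) ^ 3 * ((-σ : ℝ) : ℂ))
        = Complex.exp (Complex.I * ((-(a + b) : ℤ) : ℂ) ^ 3 * (σ : ℂ)) := by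
      congr 1
      push_cast
      ring
    show f (-(a + b)) * ((1 / 2 : ℂ) *
      (Complex.exp (Complex.I * ((a + b : ℤ) : ℂ) ^ 3 * ((-σ : ℝ) : ℂ)) *
        (Complex.I * ((a + b : ℤ) : ℂ) * (Ugrp σ g a * Ugrp σ h (a + b - a))))) =
      (1 / 2 : ℂ) * (Complex.I * ((a : ℂ) + (b : ℂ)) * Ugrp σ f (-(a + b))
        * (Ugrp σ g a * Ugrp σ h b))
    rw [harg, hexp, Ugrp_apply σ f (-(a + b))]
    push_cast
    ring
  rw [h1, h2, h3, h4]
  calc (2 * (π : ℂ)) * ∑' p : ℤ × ℤ, r (eConv p)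
      = (2 * (π : ℂ)) * ∑' p : ℤ × ℤ,
          (1 / 2 : ℂ) * qq (Ugrp σ f) (Ugrp σ g) (Ugrp σ h) p := by
        congr 1
        exact tsum_congr h5
    _ = (2 * (π : ℂ)) * ((1 / 2 : ℂ) *
          ∑' p : ℤ × ℤ, qq (Ugrp σ f) (Ugrp σ g) (Ugrp σ h) p) := by rw [tsum_mul_left]
    _ = (π : ℂ) * ∑' p : ℤ × ℤ, qq (Ugrp σ f) (Ugrp σ g) (Ugrp σ h) p := by ring

/-- The antisymmetry identity `⟨f, Ẋ_σ(f,h)⟩ = -½ ⟨h, Ẋ_σ(f,f)⟩`. -/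
lemma antisym (σ : ℝ) (f h : ℤ → ℂ) (hf : (Function.support f).Finite)
    (hh : (Function.support h).Finite) :
    innerL2 f (Xdot σ f h) = -(1 / 2 : ℂ) * innerL2 h (Xdot σ f f) := by
  rw [inner_Xdot σ f f h hf hf, inner_Xdot σ h f f hh hf]
  set F := Ugrp σ f with hF
  set H := Ugrp σ h with hH
  have hFfin : (Function.support F).Finite := by rw [hF, support_Ugrp]; exact hf
  have hHfin : (Function.support H).Finite := by rw [hH, support_Ugrp]; exact hh
  have key : (2 : ℂ) * ∑' p : ℤ × ℤ, qq F F H p + ∑' p : ℤ × ℤ, qq H F F p = 0 := by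
    have s1 : Summable (qq F F H) := qq_summable hFfin hHfin
    have s2 : Summable (qq H F F) := qq_summable hFfin hFfin
    have s1e : Summable (fun p => qq F F H (eA p)) := (eA.summable_iff (f := qq F F H)).mpr s1
    have s2e : Summable (fun p => qq H F F (eB p)) := (eB.summable_iff (f := qq H F F)).mpr s2
    have h1 : ∑' p : ℤ × ℤ, qq F F H p = ∑' p : ℤ × ℤ, qq F F H (eA p) :=
      (eA.tsum_eq (qq F F H)).symm
    have h2 : ∑' p : ℤ × ℤ, qq H F F p = ∑' p : ℤ × ℤ, qq H F F (eB p) :=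
      (eB.tsum_eq (qq H F F)).symm
    have hzero : ∀ p : ℤ × ℤ, qq F F H p + qq F F H (eA p) + qq H F F (eB p) = 0 := by
      rintro ⟨a, b⟩
      show qq F F H (a, b) + qq F F H (-a - b, b) + qq H F F (a, -a - b) = 0
      simp only [qq]
      have e1 : (-(-a - b + b) : ℤ) = a := by ring
      have e2 : (-(a + (-a - b)) : ℤ) = b := by ring
      have e3 : (-a - b : ℤ) = -(a + b) := by ring
      rw [e1, e2, e3]
      push_cast
      ring
    calc (2 : ℂ) * ∑' p : ℤ × ℤ, qq F F H p + ∑' p : ℤ × ℤ, qq H F F p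
        = ∑' p : ℤ × ℤ, qq F F H p + ∑' p : ℤ × ℤ, (fun p => qq F F H (eA p)) p
            + ∑' p : ℤ × ℤ, (fun p => qq H F F (eB p)) p := by
          rw [← h1, ← h2]; ring
      _ = ∑' p : ℤ × ℤ, (qq F F H p + qq F F H (eA p) + qq H F F (eB p)) := by
          rw [Summable.tsum_add (s1.add s1e) s2e, Summable.tsum_add s1 s1e]
      _ = 0 := by simp [hzero]
  have h2' : ∑' p : ℤ × ℤ, qq F F H p = -(1 / 2 : ℂ) * ∑' p : ℤ × ℤ, qq H F F p := by
    have := key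
    linear_combination (1 / 2 : ℂ) * key
  rw [h2']
  ring

/-! ### Continuity lemmas -/

lemma cont_Xdot_param {g : ℤ → ℂ} {S : Finset ℤ} (hg : ∀ a ∉ S, g a = 0)
    (w : ℝ → ℤ → ℂ) (hw : ∀ j : ℤ, Continuous fun σ => w σ j) (k : ℤ) :
    Continuous fun σ : ℝ => Xdot σ g (w σ) k := by
  rw [show (fun σ : ℝ => Xdot σ g (w σ) k) = fun σ : ℝ => ∑ a ∈ S, (1 / 2 : ℂ) *
      (Complex.exp (Complex.I * (k : ℂ) ^ 3 * ((-σ : ℝ) : ℂ)) *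
        (Complex.I * (k : ℂ) * (Ugrp σ g a * Ugrp σ (w σ) (k - a))))
    from funext fun σ => Xdot_eq_sum (w σ) hg σ k]
  refine continuous_finset_sum _ fun a _ => ?_
  simp only [Ugrp]
  have h1 : Continuous fun σ : ℝ =>
      Complex.exp (Complex.I * (k : ℂ) ^ 3 * ((-σ : ℝ) : ℂ)) := by fun_prop
  have h2 : Continuous fun σ : ℝ =>
      Complex.exp (Complex.I * (a : ℂ) ^ 3 * (σ : ℂ)) := by fun_prop
  have h3 : Continuous fun σ : ℝ =>
      Complex.exp (Complex.I * ((k - a : ℤ) : ℂ) ^ 3 * (σ : ℂ)) := by fun_prop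
  exact continuous_const.mul (h1.mul (continuous_const.mul
    ((h2.mul continuous_const).mul (h3.mul (hw (k - a))))))

/-! ### Main theorem -/

/-- The second `L²` conservation identity:
`2⟨φ, X²_{t,s}(φ,φ,φ)⟩ + ‖X_{t,s}(φ,φ)‖²_{L²} = 0` for smooth real mean-zero `φ`. -/
theorem inner_X2_cancellation (s t : ℝ) (φ : ℤ → ℂ)
    (hfin : (Function.support φ).Finite) (h0 : φ 0 = 0)
    (hreal : ∀ k, φ (-k) = starRingEnd ℂ (φ k)) :
    2 * innerL2 φ (X2op s t φ φ φ)
      + innerL2 (Xop s t φ φ) (Xop s t φ φ) = 0 := by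
  classical
  -- frequency cutoff
  obtain ⟨N, hN⟩ : ∃ N : ℕ, ∀ k : ℤ, N < k.natAbs → φ k = 0 := by
    refine ⟨hfin.toFinset.sup (fun k => k.natAbs), fun k hk => ?_⟩
    by_contra hne
    have hkmem : k ∈ hfin.toFinset := hfin.mem_toFinset.mpr hne
    have hle : k.natAbs ≤ hfin.toFinset.sup (fun k => k.natAbs) :=
      Finset.le_sup (f := fun k : ℤ => k.natAbs) hkmem
    omega
  set S := hfin.toFinset with hS
  have hSφ : ∀ a ∉ S, φ a = 0 := by
    intro a ha
    by_contra hne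
    exact ha (hfin.mem_toFinset.mpr hne)
  -- support bounds
  have hXdot2 : ∀ (σ : ℝ) (k : ℤ), N + N < k.natAbs → Xdot σ φ φ k = 0 :=
    fun σ k hk => Xdot_vanish hN hN σ hk
  have hXop2 : ∀ (u v : ℝ) (k : ℤ), N + N < k.natAbs → Xop u v φ φ k = 0 :=
    fun u v k hk => Xop_vanish hN hN u v hk
  have hXopfin : ∀ u v : ℝ, (Function.support (Xop u v φ φ)).Finite := by
    intro u v
    refine Set.Finite.subset (Set.finite_Icc (-(N + N : ℕ) : ℤ) ((N + N : ℕ) : ℤ)) ?_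
    intro k hk
    simp only [Function.mem_support] at hk
    by_contra hmem
    simp only [Set.mem_Icc, not_and_or, not_le] at hmem
    exact hk (hXop2 u v k (by omega))
  -- continuity
  have contF : ∀ k : ℤ, Continuous fun σ => Xdot σ φ φ k :=
    fun k => cont_Xdot_param hSφ (fun _ => φ) (fun j => continuous_const) k
  have derivXop : ∀ (k : ℤ) (τ : ℝ), HasDerivAt (fun u => Xop s u φ φ k) (Xdot τ φ φ k) τ :=
    fun k τ => ((contF k).integral_hasStrictDerivAt s τ).hasDerivAt
  have contXop : ∀ k : ℤ, Continuous fun τ => Xop s τ φ φ k :=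
    fun k => continuous_iff_continuousAt.mpr fun τ => (derivXop k τ).continuousAt
  have contA : ∀ k : ℤ, Continuous fun σ => Xdot σ φ (Xop s σ φ φ) k :=
    fun k => cont_Xdot_param hSφ (fun σ => Xop s σ φ φ) (fun j => contXop j) k
  -- the inner σ₁-integral can be absorbed into the second argument of Xdot
  have hswap : ∀ (σ : ℝ) (k : ℤ),
      (∫ σ₁ in s..σ, Xdot σ φ (Xdot σ₁ φ φ) k) = Xdot σ φ (Xop s σ φ φ) k := by
    intro σ k
    set Ca : ℤ → ℂ := fun a => (1 / 2 : ℂ) *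
      (Complex.exp (Complex.I * (k : ℂ) ^ 3 * ((-σ : ℝ) : ℂ)) *
        (Complex.I * (k : ℂ) * Ugrp σ φ a)) with hCa
    have hsum : ∀ σ₁ : ℝ, Xdot σ φ (Xdot σ₁ φ φ) k
        = ∑ a ∈ S, Ca a * (Complex.exp (Complex.I * ((k - a : ℤ) : ℂ) ^ 3 * (σ : ℂ)) *
            Xdot σ₁ φ φ (k - a)) := by
      intro σ₁
      rw [Xdot_eq_sum _ hSφ σ k]
      refine Finset.sum_congr rfl fun a _ => ?_
      rw [hCa]
      rw [Ugrp_apply σ (Xdot σ₁ φ φ) (k - a)]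
      ring
    calc (∫ σ₁ in s..σ, Xdot σ φ (Xdot σ₁ φ φ) k)
        = ∫ σ₁ in s..σ, ∑ a ∈ S, Ca a * (Complex.exp (Complex.I * ((k - a : ℤ) : ℂ) ^ 3 * (σ : ℂ)) *
            Xdot σ₁ φ φ (k - a)) := by
          simp only [hsum]
      _ = ∑ a ∈ S, ∫ σ₁ in s..σ, Ca a * (Complex.exp (Complex.I * ((k - a : ℤ) : ℂ) ^ 3 * (σ : ℂ)) *
            Xdot σ₁ φ φ (k - a)) := by
          refine intervalIntegral.integral_finset_sum fun a _ => ?_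
          exact ((continuous_const.mul (continuous_const.mul (contF (k - a)))).intervalIntegrable s σ)
      _ = ∑ a ∈ S, Ca a * (Complex.exp (Complex.I * ((k - a : ℤ) : ℂ) ^ 3 * (σ : ℂ)) *
            Xop s σ φ φ (k - a)) := by
          refine Finset.sum_congr rfl fun a _ => ?_
          rw [intervalIntegral.integral_const_mul, intervalIntegral.integral_const_mul]
          rfl
      _ = Xdot σ φ (Xop s σ φ φ) k := by
          rw [Xdot_eq_sum _ hSφ σ k]
          refine Finset.sum_congr rfl fun a _ => ?_
          rw [hCa, Ugrp_apply σ (Xop s σ φ φ) (k - a)]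
          ring
  -- main identity P1
  have hX2pt : ∀ k : ℤ, X2op s t φ φ φ k = 2 * ∫ σ in s..t, Xdot σ φ (Xop s σ φ φ) k := by
    intro k
    show (2 * ∫ σ in s..t, ∫ σ₁ in s..σ, Xdot σ φ (Xdot σ₁ φ φ) k) = _
    simp only [hswap]
  -- support bound for objects at level 3N
  have hA3 : ∀ (σ : ℝ) (k : ℤ), N + (N + N) < k.natAbs → Xdot σ φ (Xop s σ φ φ) k = 0 :=
    fun σ k hk => Xdot_vanish hN (fun a ha => hXop2 s σ a ha) σ hk
  have hX23 : ∀ k : ℤ, (N + (N + N) : ℕ) < k.natAbs → X2op s t φ φ φ k = 0 := by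
    intro k hk
    rw [hX2pt k]
    have : ∀ σ : ℝ, Xdot σ φ (Xop s σ φ φ) k = 0 := fun σ => hA3 σ k hk
    simp [this]
  -- P1 : the double-integral term
  have hP1 : innerL2 φ (X2op s t φ φ φ)
      = -∫ σ in s..t, innerL2 (Xop s σ φ φ) (Xdot σ φ φ) := by
    have e1 : innerL2 φ (X2op s t φ φ φ)
        = ∑ k ∈ Finset.Icc (-(N + (N + N) : ℕ) : ℤ) ((N + (N + N) : ℕ) : ℤ),
            ∫ σ in s..t, ((2 * (π : ℂ)) * (φ (-k) * 2)) * Xdot σ φ (Xop s σ φ φ) k := by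
      rw [innerL2_eq_sum hX23 φ, Finset.mul_sum]
      refine Finset.sum_congr rfl fun k _ => ?_
      rw [hX2pt k, intervalIntegral.integral_const_mul]
      ring
    have e2 : ∑ k ∈ Finset.Icc (-(N + (N + N) : ℕ) : ℤ) ((N + (N + N) : ℕ) : ℤ),
            ∫ σ in s..t, ((2 * (π : ℂ)) * (φ (-k) * 2)) * Xdot σ φ (Xop s σ φ φ) k
        = ∫ σ in s..t, ∑ k ∈ Finset.Icc (-(N + (N + N) : ℕ) : ℤ) ((N + (N + N) : ℕ) : ℤ),
            ((2 * (π : ℂ)) * (φ (-k) * 2)) * Xdot σ φ (Xop s σ φ φ) k :=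
      (intervalIntegral.integral_finset_sum fun k _ =>
        (continuous_const.mul (contA k)).intervalIntegrable s t).symm
    have e3 : ∀ σ : ℝ, ∑ k ∈ Finset.Icc (-(N + (N + N) : ℕ) : ℤ) ((N + (N + N) : ℕ) : ℤ),
            ((2 * (π : ℂ)) * (φ (-k) * 2)) * Xdot σ φ (Xop s σ φ φ) k
        = -innerL2 (Xop s σ φ φ) (Xdot σ φ φ) := by
      intro σ
      have ha : innerL2 φ (Xdot σ φ (Xop s σ φ φ))
          = -(1 / 2 : ℂ) * innerL2 (Xop s σ φ φ) (Xdot σ φ φ) :=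
        antisym σ φ (Xop s σ φ φ) hfin (hXopfin s σ)
      have hb : innerL2 φ (Xdot σ φ (Xop s σ φ φ))
          = (2 * (π : ℂ)) * ∑ k ∈ Finset.Icc (-(N + (N + N) : ℕ) : ℤ) ((N + (N + N) : ℕ) : ℤ),
              φ (-k) * Xdot σ φ (Xop s σ φ φ) k :=
        innerL2_eq_sum (hA3 σ) φ
      have hc : ∑ k ∈ Finset.Icc (-(N + (N + N) : ℕ) : ℤ) ((N + (N + N) : ℕ) : ℤ),
            ((2 * (π : ℂ)) * (φ (-k) * 2)) * Xdot σ φ (Xop s σ φ φ) k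
          = 2 * ((2 * (π : ℂ)) * ∑ k ∈ Finset.Icc (-(N + (N + N) : ℕ) : ℤ) ((N + (N + N) : ℕ) : ℤ),
              φ (-k) * Xdot σ φ (Xop s σ φ φ) k) := by
        rw [Finset.mul_sum, Finset.mul_sum]
        refine Finset.sum_congr rfl fun k _ => by ring
      rw [hc, ← hb, ha]
      ring
    rw [e1, e2]
    simp only [e3]
    exact intervalIntegral.integral_neg
  -- P2 : the quadratic term, via FTC
  have hP2 : innerL2 (Xop s t φ φ) (Xop s t φ φ)
      = ∫ σ in s..t, 2 * innerL2 (Xop s σ φ φ) (Xdot σ φ φ) := by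
    set G : ℝ → ℂ := fun τ => (2 * (π : ℂ)) * ∑ k ∈ Finset.Icc (-(N + N : ℕ) : ℤ) ((N + N : ℕ) : ℤ),
        Xop s τ φ φ (-k) * Xop s τ φ φ k with hG
    have hGeq : ∀ τ : ℝ, innerL2 (Xop s τ φ φ) (Xop s τ φ φ) = G τ :=
      fun τ => innerL2_eq_sum (fun k hk => hXop2 s τ k hk) _
    have hGderiv : ∀ τ : ℝ, HasDerivAt G
        ((2 * (π : ℂ)) * ∑ k ∈ Finset.Icc (-(N + N : ℕ) : ℤ) ((N + N : ℕ) : ℤ),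
          (Xdot τ φ φ (-k) * Xop s τ φ φ k + Xop s τ φ φ (-k) * Xdot τ φ φ k)) τ := by
      intro τ
      rw [hG]
      exact HasDerivAt.const_mul _
        (HasDerivAt.fun_sum fun k _ => (derivXop (-k) τ).mul (derivXop k τ))
    have hrein : ∀ τ : ℝ,
        ∑ k ∈ Finset.Icc (-(N + N : ℕ) : ℤ) ((N + N : ℕ) : ℤ), Xdot τ φ φ (-k) * Xop s τ φ φ k
        = ∑ k ∈ Finset.Icc (-(N + N : ℕ) : ℤ) ((N + N : ℕ) : ℤ),
            Xop s τ φ φ (-k) * Xdot τ φ φ k := by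
      intro τ
      refine Finset.sum_nbij' (fun k => -k) (fun k => -k) ?_ ?_ ?_ ?_ ?_
      · intro a ha; simp only [Finset.mem_Icc] at *; omega
      · intro a ha; simp only [Finset.mem_Icc] at *; omega
      · intro a _; ring
      · intro a _; ring
      · intro a _; rw [neg_neg]; ring
    have hkey : ∀ τ : ℝ,
        (2 * (π : ℂ)) * ∑ k ∈ Finset.Icc (-(N + N : ℕ) : ℤ) ((N + N : ℕ) : ℤ),
          (Xdot τ φ φ (-k) * Xop s τ φ φ k + Xop s τ φ φ (-k) * Xdot τ φ φ k)
        = 2 * innerL2 (Xop s τ φ φ) (Xdot τ φ φ) := by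
      intro τ
      rw [Finset.sum_add_distrib, hrein τ,
        innerL2_eq_sum (fun k hk => hXdot2 τ k hk) (Xop s τ φ φ)]
      ring
    have hcont : Continuous fun τ : ℝ =>
        (2 * (π : ℂ)) * ∑ k ∈ Finset.Icc (-(N + N : ℕ) : ℤ) ((N + N : ℕ) : ℤ),
          (Xdot τ φ φ (-k) * Xop s τ φ φ k + Xop s τ φ φ (-k) * Xdot τ φ φ k) :=
      continuous_const.mul (continuous_finset_sum _ fun k _ =>
        ((contF (-k)).mul (contXop k)).add ((contXop (-k)).mul (contF k)))
    have hint : (∫ σ in s..t,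
        (2 * (π : ℂ)) * ∑ k ∈ Finset.Icc (-(N + N : ℕ) : ℤ) ((N + N : ℕ) : ℤ),
          (Xdot σ φ φ (-k) * Xop s σ φ φ k + Xop s σ φ φ (-k) * Xdot σ φ φ k)) = G t - G s :=
      intervalIntegral.integral_eq_sub_of_hasDerivAt (fun τ _ => hGderiv τ)
        (hcont.intervalIntegrable s t)
    have hXopss : ∀ k : ℤ, Xop s s φ φ k = 0 := by
      intro k
      show (∫ σ in s..s, Xdot σ φ φ k) = 0
      simp
    have hGs : G s = 0 := by
      rw [hG]
      simp [hXopss]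
    calc innerL2 (Xop s t φ φ) (Xop s t φ φ) = G t := hGeq t
      _ = G t - G s := by rw [hGs, sub_zero]
      _ = ∫ σ in s..t,
            (2 * (π : ℂ)) * ∑ k ∈ Finset.Icc (-(N + N : ℕ) : ℤ) ((N + N : ℕ) : ℤ),
              (Xdot σ φ φ (-k) * Xop s σ φ φ k + Xop s σ φ φ (-k) * Xdot σ φ φ k) := hint.symm
      _ = ∫ σ in s..t, 2 * innerL2 (Xop s σ φ φ) (Xdot σ φ φ) := by simp only [hkey]
  rw [hP1, hP2, intervalIntegral.integral_const_mul]
  ring
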